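/- For all integers L ≥ 0 and k ≥ 0: Σ_{M=0}^{L} ((2M+1)/(2L+1))·C(2L+1, L−M)·C(M,k)·C(M+k,k) = C(L,k)·C(2L,L), where all C(·,·) are ordinary binomial coefficients. (This is the identity Σ_{m ∈ {1/2, 3/2, …, ℓ}} A_{ℓ,m}·p̃_k(m) = binom(ℓ−1/2, k)·binom(2ℓ−1, ℓ−1/2) for the half-integer ℓ = L+1/2, where A_{ℓ,m} := (2m/2ℓ)·C(2ℓ, ℓ−m) and p̃_k(M+1/2) = C(M,k)·C(M+k,k).) -/

import Mathlib

open Finset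

/-- `C(M,k+1)·(k+1) = C(M,k)·(M-k)` over `ℚ` (true subtraction). -/
private lemma q_choose_succ (M k : ℕ) :
    (Nat.choose M (k+1) : ℚ) * ((k:ℚ)+1) = (Nat.choose M k : ℚ) * ((M:ℚ) - k) := by
  rcases le_or_gt k M with h | h
  · have h1 := Nat.choose_succ_right_eq M k
    have h2 : ((Nat.choose M (k+1) * (k+1) : ℕ) : ℚ) = ((Nat.choose M k * (M - k) : ℕ) : ℚ) := by
      rw [h1]
    push_cast [h] at h2
    linarith
  · rw [Nat.choose_eq_zero_of_lt h, Nat.choose_eq_zero_of_lt (h.trans (Nat.lt_succ_self k))]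
    simp

/-- `C(n+1,k)·(n+1-k) = C(n,k)·(n+1)` over `ℚ` (true subtraction). -/
private lemma q_succ_choose (n k : ℕ) :
    (Nat.choose (n+1) k : ℚ) * ((n:ℚ) + 1 - k) = (Nat.choose n k : ℚ) * ((n:ℚ) + 1) := by
  rcases le_or_gt k (n+1) with h | h
  · have h1 := Nat.choose_mul_succ_eq n k
    have h2 : ((Nat.choose n k * (n+1) : ℕ) : ℚ) = ((Nat.choose (n+1) k * (n+1-k) : ℕ) : ℚ) := by
      rw [h1]
    push_cast [h] at h2
    linarith
  · rw [Nat.choose_eq_zero_of_lt h, Nat.choose_eq_zero_of_lt (by omega : n < k)]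
    simp

/-- `C(n+1,k+1)·(k+1) = (n+1)·C(n,k)` over `ℚ`. -/
private lemma q_succ_mul_choose (n k : ℕ) :
    (Nat.choose (n+1) (k+1) : ℚ) * ((k:ℚ)+1) = ((n:ℚ)+1) * (Nat.choose n k : ℚ) := by
  have h1 := Nat.add_one_mul_choose_eq n k
  have h2 : ((n:ℚ)+1) * (Nat.choose n k : ℚ) = (Nat.choose (n+1) (k+1) : ℚ) * ((k:ℚ)+1) := by
    exact_mod_cast h1
  linarith

/-- Relation A: for `M ≤ L`,
`(L+1-M)·C(2L+1,L+1-M) = (L+M+1)·C(2L+1,L-M)` over `ℚ`. -/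
private lemma relA {L M : ℕ} (hM : M ≤ L) :
    (Nat.choose (2*L+1) (L+1-M) : ℚ) * ((L:ℚ) + 1 - M)
      = (Nat.choose (2*L+1) (L-M) : ℚ) * ((L:ℚ) + M + 1) := by
  have h1 := Nat.choose_succ_right_eq (2*L+1) (L-M)
  have e1 : L - M + 1 = L + 1 - M := by omega
  have e2 : 2*L+1 - (L-M) = L + M + 1 := by omega
  rw [e1, e2] at h1
  have h2 : ((Nat.choose (2*L+1) (L+1-M) * (L+1-M) : ℕ) : ℚ)
      = ((Nat.choose (2*L+1) (L-M) * (L+M+1) : ℕ) : ℚ) := by rw [h1]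
  have e3 : ((L + 1 - M : ℕ) : ℚ) = (L:ℚ) + 1 - M := by
    have : M ≤ L + 1 := by omega
    push_cast [this]; ring
  push_cast [e3] at h2
  linarith

/-- The telescoping certificate function. -/
private def ff (L k : ℕ) : ℕ → ℚ := fun M =>
  (M:ℚ) * ((M:ℚ) - k) * ((L:ℚ) + 1 - M) * (Nat.choose (2*L+1) (L+1-M) : ℚ) *
    (Nat.choose M k : ℚ) * (Nat.choose (M+k) k : ℚ)

/-- Auxiliary sum, the statement's LHS times `2L+1`. -/
private def TT (L k : ℕ) : ℚ :=
  ∑ M ∈ Finset.range (L+1),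
    (2*(M:ℚ)+1) * (Nat.choose (2*L+1) (L-M) : ℚ) *
      (Nat.choose M k : ℚ) * (Nat.choose (M+k) k : ℚ)

private lemma step (L k : ℕ) :
    ((k:ℚ)+1)^2 * TT L (k+1) = ((L:ℚ) - k) * ((k:ℚ)+1) * TT L k := by
  have key : ∀ M ∈ Finset.range (L+1),
      ((k:ℚ)+1)^2 * ((2*(M:ℚ)+1) * (Nat.choose (2*L+1) (L-M) : ℚ) *
          (Nat.choose M (k+1) : ℚ) * (Nat.choose (M+(k+1)) (k+1) : ℚ))
        - ((L:ℚ) - k) * ((k:ℚ)+1) * ((2*(M:ℚ)+1) * (Nat.choose (2*L+1) (L-M) : ℚ) *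
          (Nat.choose M k : ℚ) * (Nat.choose (M+k) k : ℚ))
      = ff L k M - ff L k (M+1) := by
    intro M hMr
    have hM : M ≤ L := by simpa [Nat.lt_succ_iff] using hMr
    set A : ℚ := (Nat.choose (2*L+1) (L-M) : ℚ) with hA
    set A' : ℚ := (Nat.choose (2*L+1) (L+1-M) : ℚ) with hA'
    set B₁ : ℚ := (Nat.choose M (k+1) : ℚ) with hB₁
    set B₂ : ℚ := (Nat.choose (M+k+1) (k+1) : ℚ) with hB₂
    set C₁ : ℚ := (Nat.choose M k : ℚ) with hC₁
    set C₂ : ℚ := (Nat.choose (M+k) k : ℚ) with hC₂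
    set D₁ : ℚ := (Nat.choose (M+1) k : ℚ) with hD₁
    set D₂ : ℚ := (Nat.choose (M+k+1) k : ℚ) with hD₂
    have e1 : B₁ * ((k:ℚ)+1) = C₁ * ((M:ℚ) - k) := q_choose_succ M k
    have e2 : B₂ * ((k:ℚ)+1) = ((M:ℚ)+(k:ℚ)+1) * C₂ := by
      have := q_succ_mul_choose (M+k) k
      push_cast at this ⊢
      convert this using 2 <;> push_cast <;> ring
    have e3 : A' * ((L:ℚ) + 1 - M) = A * ((L:ℚ) + M + 1) := relA hM
    have e4 : D₁ * ((M:ℚ) + 1 - k) = C₁ * ((M:ℚ) + 1) := q_succ_choose M k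
    have e5 : D₂ * ((M:ℚ) + 1) = C₂ * ((M:ℚ) + (k:ℚ) + 1) := by
      have := q_succ_choose (M+k) k
      push_cast at this ⊢
      linarith
    have hfM : ff L k M = (M:ℚ) * ((M:ℚ) - k) * ((L:ℚ) + M + 1) * A * C₁ * C₂ := by
      unfold ff
      rw [← hA', ← hC₁, ← hC₂]
      linear_combination ((M:ℚ) * ((M:ℚ) - k) * C₁ * C₂) * e3
    have hfM1 : ff L k (M+1) = ((L:ℚ) - M) * ((M:ℚ)+1) * ((M:ℚ)+(k:ℚ)+1) * A * C₁ * C₂ := by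
      unfold ff
      have i1 : L + 1 - (M+1) = L - M := by omega
      have i2 : M + 1 + k = M + k + 1 := by omega
      rw [i1, i2, ← hA, ← hD₁, ← hD₂]
      push_cast
      linear_combination (((L:ℚ) - M) * ((M:ℚ)+1) * D₂) * e4
        + (((L:ℚ) - M) * C₁ * ((M:ℚ)+1)) * e5
        - ((L:ℚ) - M) * ((M:ℚ)+1) * D₂ * e4
        + (((L:ℚ) - M) * ((M:ℚ)+1) * A * D₂) * e4
        + (((L:ℚ) - M) * ((M:ℚ)+1) * A * C₁) * e5
        - (((L:ℚ) - M) * C₁ * ((M:ℚ)+1)) * e5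
    have hMk1 : (Nat.choose (M+(k+1)) (k+1) : ℚ) = B₂ := by
      have e : M + (k+1) = M + k + 1 := by omega
      rw [e, hB₂]
    rw [hMk1, hfM, hfM1]
    linear_combination ((2*(M:ℚ)+1) * A * ((k:ℚ)+1) * B₂) * e1
      + ((2*(M:ℚ)+1) * A * ((M:ℚ) - k) * C₁) * e2
  have hsum := Finset.sum_congr rfl key
  have htel : ∑ M ∈ Finset.range (L+1), (ff L k M - ff L k (M+1))
      = ff L k 0 - ff L k (L+1) := Finset.sum_range_sub' (ff L k) (L+1)
  have h0 : ff L k 0 = 0 := by unfold ff; simp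
  have hL1 : ff L k (L+1) = 0 := by
    unfold ff; push_cast; ring
  rw [Finset.sum_sub_distrib] at hsum
  have hTT1 : TT L (k+1)
      = ∑ M ∈ Finset.range (L+1), (2*(M:ℚ)+1) * (Nat.choose (2*L+1) (L-M) : ℚ) *
          (Nat.choose M (k+1) : ℚ) * (Nat.choose (M+(k+1)) (k+1) : ℚ) := rfl
  have hTT0 : TT L k
      = ∑ M ∈ Finset.range (L+1), (2*(M:ℚ)+1) * (Nat.choose (2*L+1) (L-M) : ℚ) *
          (Nat.choose M k : ℚ) * (Nat.choose (M+k) k : ℚ) := rfl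
  rw [← Finset.mul_sum, ← Finset.mul_sum, ← hTT1, ← hTT0, htel, h0, hL1] at hsum
  linarith

private lemma base (L : ℕ) : TT L 0 = (2*(L:ℚ)+1) * (Nat.choose (2*L) L : ℚ) := by
  have key : ∀ M ∈ Finset.range (L+1),
      (2*(M:ℚ)+1) * (Nat.choose (2*L+1) (L-M) : ℚ) *
        (Nat.choose M 0 : ℚ) * (Nat.choose (M+0) 0 : ℚ)
      = (((L:ℚ) + 1 - M) * (Nat.choose (2*L+1) (L+1-M) : ℚ))
        - (((L:ℚ) + 1 - (M+1)) * (Nat.choose (2*L+1) (L+1-(M+1)) : ℚ)) := by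
    intro M hMr
    have hM : M ≤ L := by simpa [Nat.lt_succ_iff] using hMr
    have e3 := relA hM
    have i1 : L + 1 - (M+1) = L - M := by omega
    rw [i1]
    simp only [Nat.choose_zero_right, Nat.cast_one]
    push_cast
    linear_combination -e3
  have hsum := Finset.sum_congr rfl key
  have htel : ∑ M ∈ Finset.range (L+1),
      ((fun M => ((L:ℚ) + 1 - M) * (Nat.choose (2*L+1) (L+1-M) : ℚ)) M
        - (fun M => ((L:ℚ) + 1 - M) * (Nat.choose (2*L+1) (L+1-M) : ℚ)) (M+1))
      = ((L:ℚ) + 1 - (0:ℕ)) * (Nat.choose (2*L+1) (L+1-0) : ℚ)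
        - ((L:ℚ) + 1 - ((L+1:ℕ):ℚ)) * (Nat.choose (2*L+1) (L+1-(L+1)) : ℚ) :=
    Finset.sum_range_sub' _ (L+1)
  simp only at htel
  have hsum2 : TT L 0 = ((L:ℚ) + 1 - (0:ℕ)) * (Nat.choose (2*L+1) (L+1-0) : ℚ)
        - ((L:ℚ) + 1 - ((L+1:ℕ):ℚ)) * (Nat.choose (2*L+1) (L+1-(L+1)) : ℚ) := by
    rw [TT, hsum]
    push_cast at htel ⊢
    convert htel using 2
  rw [hsum2]
  have h2 : (Nat.choose (2*L+1) (L+1) : ℚ) * ((L:ℚ)+1)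
      = (2*(L:ℚ)+1) * (Nat.choose (2*L) L : ℚ) := by
    have := q_succ_mul_choose (2*L) L
    push_cast at this
    linarith
  have e2 : L + 1 - 0 = L + 1 := by omega
  have e3 : L + 1 - (L+1) = 0 := by omega
  rw [e2, e3]
  push_cast
  simp only [Nat.choose_zero_right, Nat.cast_one]
  linarith

private lemma TT_eq (L k : ℕ) :
    TT L k = (2*(L:ℚ)+1) * (Nat.choose L k : ℚ) * (Nat.choose (2*L) L : ℚ) := by
  induction k with
  | zero => rw [base]; simp
  | succ k ih =>
    have hstep := step L k
    rw [ih] at hstep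
    have hk : ((k:ℚ)+1) ≠ 0 := by positivity
    have hch := q_choose_succ L k
    have : ((k:ℚ)+1)^2 * TT L (k+1)
        = ((k:ℚ)+1)^2 * ((2*(L:ℚ)+1) * (Nat.choose L (k+1) : ℚ) * (Nat.choose (2*L) L : ℚ)) := by
      rw [hstep]
      linear_combination ((2*(L:ℚ)+1) * (Nat.choose (2*L) L : ℚ) * ((k:ℚ)+1)) * hch.symm
    have hk2 : ((k:ℚ)+1)^2 ≠ 0 := pow_ne_zero _ hk
    exact mul_left_cancel₀ hk2 this

/-- The hypergeometric identity
`Σ_{M=0}^{L} ((2M+1)/(2L+1))·C(2L+1,L-M)·C(M,k)·C(M+k,k) = C(L,k)·C(2L,L)`,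
i.e. `Σ_{half-integers m ≤ ℓ} A_{ℓ,m}·p̃_k(m) = binom(ℓ-1/2,k)·binom(2ℓ-1,ℓ-1/2)`
for the half-integer `ℓ = L + 1/2`. -/
theorem stmt7 (L k : ℕ) :
    ∑ M ∈ Finset.range (L + 1),
        ((2 * (M : ℚ) + 1) / (2 * (L : ℚ) + 1)) * (Nat.choose (2 * L + 1) (L - M) : ℚ) *
          (Nat.choose M k : ℚ) * (Nat.choose (M + k) k : ℚ) =
      (Nat.choose L k : ℚ) * (Nat.choose (2 * L) L : ℚ) := by
  have hL : (2*(L:ℚ)+1) ≠ 0 := by positivity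
  have h1 : ∑ M ∈ Finset.range (L + 1),
        ((2 * (M : ℚ) + 1) / (2 * (L : ℚ) + 1)) * (Nat.choose (2 * L + 1) (L - M) : ℚ) *
          (Nat.choose M k : ℚ) * (Nat.choose (M + k) k : ℚ)
      = TT L k / (2*(L:ℚ)+1) := by
    rw [TT, Finset.sum_div]
    refine Finset.sum_congr rfl fun M _ => ?_
    field_simp
  rw [h1, TT_eq]
  field_simp
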